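/- If X ~ N(0, s²) with s > 0, then E[max{ζ(X), 0}] ≤ s²/(2σ²) + ((ρ_L+ρ_U)/σ²)·s·√(2/π), where ζ is the piecewise function of the RGCUSUM statistic. In particular with s = σ‖p‖₂, E[max{ζ(X),0}] ≤ ‖p‖₂²/2 + ((ρ_L+ρ_U)/σ)‖p‖₂√(2/π). -/

import Mathlib

open MeasureTheory ProbabilityTheory NNReal

noncomputable def zeta (σ ρL ρU x : ℝ) : ℝ :=
  if ρL ≤ |x| ∧ |x| ≤ ρU then x ^ 2 / (2 * σ ^ 2)
  else if |x| < ρL then (2 * |x| * ρL - ρL ^ 2) / (2 * σ ^ 2)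
  else (2 * |x| * ρU - ρU ^ 2) / (2 * σ ^ 2)

lemma zeta_le_bound (σ ρL ρU : ℝ) (hσ : 0 < σ) (hL : 0 < ρL) (hLU : ρL ≤ ρU) (x : ℝ) :
    max (zeta σ ρL ρU x) 0 ≤ (x ^ 2 + 2 * (ρL + ρU) * |x|) / (2 * σ ^ 2) := by
  have hU : 0 < ρU := lt_of_lt_of_le hL hLU
  have ha : 0 ≤ |x| := abs_nonneg x
  have hsq : |x| ^ 2 = x ^ 2 := sq_abs x
  apply max_le
  · rw [zeta]
    split_ifs with h1 h2
    · gcongr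
      nlinarith
    · gcongr
      nlinarith
    · push_neg at h1 h2
      gcongr
      nlinarith
  · positivity

theorem stmt2 (σ ρL ρU s : ℝ) (hσ : 0 < σ) (hL : 0 < ρL) (hLU : ρL ≤ ρU)
    (hs : 0 < s) (v : ℝ≥0) (hv : (v : ℝ) = s ^ 2) :
    (∫ x, max (zeta σ ρL ρU x) 0 ∂(gaussianReal 0 v) ≤
      s ^ 2 / (2 * σ ^ 2) + ((ρL + ρU) / σ ^ 2) * s * Real.sqrt (2 / Real.pi)) ∧
    (∀ {M : ℕ} (p : EuclideanSpace ℝ (Fin M)), s = σ * ‖p‖ →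
      ∫ x, max (zeta σ ρL ρU x) 0 ∂(gaussianReal 0 v) ≤
        ‖p‖ ^ 2 / 2 + ((ρL + ρU) / σ) * ‖p‖ * Real.sqrt (2 / Real.pi)) := by
  have hπ : (0:ℝ) < Real.pi := Real.pi_pos
  have hU : 0 < ρU := lt_of_lt_of_le hL hLU
  have hσ' : σ ≠ 0 := ne_of_gt hσ
  have hs' : s ≠ 0 := ne_of_gt hs
  set K : ℝ := (ρL + ρU) / σ ^ 2 with hK
  have hK0 : 0 ≤ K := by positivity
  set b : ℝ := (2 * s ^ 2)⁻¹ with hbd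
  have hb : (0:ℝ) < b := by positivity
  set g : ℝ → ℝ := fun x => x ^ 2 / (2 * σ ^ 2) + K * |x| with hg
  have hv0 : v ≠ 0 := by
    intro h
    rw [h] at hv
    simp at hv
    nlinarith
  have hInt1 : Integrable (fun x : ℝ => |x| * Real.exp (-b * x ^ 2)) := by
    have := (integrable_mul_exp_neg_mul_sq hb).abs
    simpa [abs_mul, abs_of_pos (Real.exp_pos _)] using this
  have hInt2 : Integrable (fun x : ℝ => x ^ 2 * Real.exp (-b * x ^ 2)) := by
    have h2 := integrable_rpow_mul_exp_neg_mul_sq hb (s := 2) (by norm_num)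
    have hrw : ∀ x : ℝ, x ^ (2:ℝ) = x ^ 2 := by
      intro x
      rw [show (2:ℝ) = ((2:ℕ):ℝ) by norm_num, Real.rpow_natCast]
    simpa [hrw] using h2
  have e1 : ∫ x in Set.Ioi (0:ℝ), x * Real.exp (-b * x ^ 2) = s ^ 2 := by
    have h := integral_rpow_mul_exp_neg_mul_rpow (p := 2) (q := 1)
      (by norm_num) (by norm_num) hb
    have hrw : ∀ x : ℝ, x ^ (1:ℝ) * Real.exp (-b * x ^ (2:ℝ))
        = x * Real.exp (-b * x ^ 2) := by
      intro x
      rw [Real.rpow_one, show (2:ℝ) = ((2:ℕ):ℝ) by norm_num, Real.rpow_natCast]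
    rw [integral_congr_ae (Filter.Eventually.of_forall fun x => hrw x)] at h
    rw [h, show (-((1:ℝ) + 1) / 2) = -1 by norm_num, show ((1:ℝ) + 1) / 2 = 1 by norm_num,
      Real.Gamma_one, Real.rpow_neg_one, hbd]
    field_simp
  have e2 : ∫ x in Set.Ioi (0:ℝ), x ^ 2 * Real.exp (-b * x ^ 2)
      = Real.sqrt 2 / 2 * s ^ 3 * Real.sqrt Real.pi := by
    have h := integral_rpow_mul_exp_neg_mul_rpow (p := 2) (q := 2)
      (by norm_num) (by norm_num) hb
    have hrw : ∀ x : ℝ, x ^ (2:ℝ) * Real.exp (-b * x ^ (2:ℝ))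
        = x ^ 2 * Real.exp (-b * x ^ 2) := by
      intro x
      rw [show (2:ℝ) = ((2:ℕ):ℝ) by norm_num, Real.rpow_natCast]
    rw [integral_congr_ae (Filter.Eventually.of_forall fun x => hrw x)] at h
    rw [h]
    have hG : Real.Gamma (((2:ℝ) + 1) / 2) = 1 / 2 * Real.sqrt Real.pi := by
      rw [show ((2:ℝ) + 1) / 2 = 1/2 + 1 by norm_num,
        Real.Gamma_add_one (by norm_num), Real.Gamma_one_half_eq]
    rw [hG]
    have hbv : b ^ (-((2:ℝ) + 1) / 2) = 2 * Real.sqrt 2 * s ^ 3 := by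
      rw [hbd, show -((2:ℝ) + 1) / 2 = -(3/2) by norm_num,
        Real.rpow_neg (by positivity), Real.inv_rpow (by positivity), inv_inv,
        show (3:ℝ)/2 = (1/2) * 3 by norm_num, Real.rpow_mul (by positivity),
        ← Real.sqrt_eq_rpow, show ((2:ℝ) * s ^ 2) = 2 * s ^ 2 from rfl]
      have h1 : Real.sqrt (2 * s ^ 2) = Real.sqrt 2 * s := by
        rw [Real.sqrt_mul (by norm_num), Real.sqrt_sq hs.le]
      rw [h1, show (3:ℝ) = ((3:ℕ):ℝ) by norm_num, Real.rpow_natCast]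
      have h3 : Real.sqrt 2 ^ 3 = 2 * Real.sqrt 2 := by
        rw [pow_succ, Real.sq_sqrt (by norm_num : (0:ℝ) ≤ 2)]
      rw [mul_pow, h3]
    rw [hbv]
    ring
  have hI1 : ∫ x : ℝ, |x| * Real.exp (-b * x ^ 2) = 2 * s ^ 2 := by
    have h := integral_comp_abs (f := fun t => t * Real.exp (-b * t ^ 2))
    simp only [sq_abs] at h
    rw [h, e1]
  have hI2 : ∫ x : ℝ, x ^ 2 * Real.exp (-b * x ^ 2)
      = Real.sqrt 2 * s ^ 3 * Real.sqrt Real.pi := by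
    have h := integral_comp_abs (f := fun t => t ^ 2 * Real.exp (-b * t ^ 2))
    simp only [sq_abs] at h
    rw [h, e2]
    ring
  set c : ℝ := (Real.sqrt (2 * Real.pi * (v:ℝ)))⁻¹ with hc
  have hpdf : ∀ x : ℝ, gaussianPDFReal 0 v x = c * Real.exp (-b * x ^ 2) := by
    intro x
    rw [gaussianPDFReal]
    congr 2
    rw [hv, hbd]
    field_simp
    ring
  have hgauss : ∀ h : ℝ → ℝ, (∫ x, h x ∂(gaussianReal 0 v))
      = ∫ x, gaussianPDFReal 0 v x * h x := by
    intro h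
    rw [gaussianReal_of_var_ne_zero 0 hv0,
      show gaussianPDF 0 v = fun x => (((gaussianPDFReal 0 v x).toNNReal : ℝ≥0) : ENNReal)
        from rfl,
      integral_withDensity_eq_integral_smul (measurable_gaussianPDFReal 0 v).real_toNNReal]
    congr 1
    funext x
    rw [NNReal.smul_def, smul_eq_mul, Real.coe_toNNReal _ (gaussianPDFReal_nonneg 0 v x)]
  have hgeq : (fun x : ℝ => gaussianPDFReal 0 v x * g x)
      = fun x => c * ((2 * σ ^ 2)⁻¹ * (x ^ 2 * Real.exp (-b * x ^ 2))
          + K * (|x| * Real.exp (-b * x ^ 2))) := by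
    funext x
    rw [hpdf x, hg]
    ring
  have hIntg : Integrable g (gaussianReal 0 v) := by
    rw [gaussianReal_of_var_ne_zero 0 hv0,
      show gaussianPDF 0 v = fun x => (((gaussianPDFReal 0 v x).toNNReal : ℝ≥0) : ENNReal)
        from rfl,
      integrable_withDensity_iff_integrable_smul (measurable_gaussianPDFReal 0 v).real_toNNReal]
    have heq : (fun x : ℝ => ((gaussianPDFReal 0 v x).toNNReal : ℝ≥0) • g x)
        = fun x => gaussianPDFReal 0 v x * g x := by
      funext x
      rw [NNReal.smul_def, smul_eq_mul, Real.coe_toNNReal _ (gaussianPDFReal_nonneg 0 v x)]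
    rw [heq, hgeq]
    exact ((hInt2.const_mul _).add (hInt1.const_mul _)).const_mul _
  have hsπ : (0:ℝ) < Real.sqrt Real.pi := Real.sqrt_pos.mpr hπ
  have hs2 : (0:ℝ) < Real.sqrt 2 := Real.sqrt_pos.mpr (by norm_num)
  have hcval : c * (Real.sqrt 2 * s * Real.sqrt Real.pi) = 1 := by
    rw [hc, hv]
    rw [show (2:ℝ) * Real.pi * s ^ 2 = (Real.sqrt 2 * s * Real.sqrt Real.pi) ^ 2 from by
      rw [mul_pow, mul_pow, Real.sq_sqrt (by norm_num : (0:ℝ) ≤ 2), Real.sq_sqrt hπ.le]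
      ring]
    rw [Real.sqrt_sq (by positivity)]
    field_simp
  have hcv : c = (Real.sqrt 2 * s * Real.sqrt Real.pi)⁻¹ :=
    eq_inv_of_mul_eq_one_left (by rw [mul_comm] at hcval ⊢; exact hcval)
  have hIg : ∫ x, g x ∂(gaussianReal 0 v)
      = s ^ 2 / (2 * σ ^ 2) + K * s * Real.sqrt (2 / Real.pi) := by
    rw [hgauss g, show (fun x : ℝ => gaussianPDFReal 0 v x * g x) = _ from hgeq,
      integral_const_mul, integral_add (hInt2.const_mul _) (hInt1.const_mul _),
      integral_const_mul, integral_const_mul, hI1, hI2,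
      Real.sqrt_div (by norm_num : (0:ℝ) ≤ 2) Real.pi, hcv]
    have hA : Real.sqrt 2 / Real.sqrt Real.pi = 2 / (Real.sqrt 2 * Real.sqrt Real.pi) := by
      rw [div_eq_div_iff hsπ.ne' (by positivity), ← mul_assoc,
        Real.mul_self_sqrt (by norm_num : (0:ℝ) ≤ 2)]
    rw [hA]
    field_simp
  have hbound : ∀ x : ℝ, max (zeta σ ρL ρU x) 0 ≤ g x := by
    intro x
    have hRHS : g x = (x ^ 2 + 2 * (ρL + ρU) * |x|) / (2 * σ ^ 2) := by
      rw [hg, hK]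
      field_simp
    rw [hRHS]
    exact zeta_le_bound σ ρL ρU hσ hL hLU x
  have h1 : ∫ x, max (zeta σ ρL ρU x) 0 ∂(gaussianReal 0 v)
      ≤ s ^ 2 / (2 * σ ^ 2) + K * s * Real.sqrt (2 / Real.pi) := by
    calc ∫ x, max (zeta σ ρL ρU x) 0 ∂(gaussianReal 0 v)
        ≤ ∫ x, g x ∂(gaussianReal 0 v) :=
          integral_mono_of_nonneg (Filter.Eventually.of_forall fun x => le_max_right _ 0)
            hIntg (Filter.Eventually.of_forall hbound)
      _ = _ := hIg
  refine ⟨h1, ?_⟩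
  intro M p hp
  have hnp : ‖p‖ = s / σ := by
    rw [hp]
    field_simp
  rw [hnp]
  refine h1.trans_eq ?_
  rw [hK]
  field_simp
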